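/- arXiv:2001.01835 — 3 statements merged into one kernel-verified Lean document; each statement's English description precedes it below -/
import Mathlib

section
/- Let p be a monotone property, and let A₁, A₂ be a partition of A (A₁∪A₂=A, A₁∩A₂=∅). If X₂ is a minimal p-set wrt ⟨A₂, B∪A₁⟩ and X₁ is a minimal p-set wrt ⟨A₁, B∪X₂⟩, then X₁∪X₂ is a minimal p-set wrt ⟨A,B⟩. -/
variable {α : Type*} [DecidableEq α]

def Monop (p : Finset α → Bool) : Prop :=
  p ∅ = false ∧ ∀ X Y : Finset α, X ⊆ Y → p X ≤ p Y

def QPSet (p : Finset α → Bool) (A B X : Finset α) : Prop :=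
  X ⊆ A ∧ p (X ∪ B) = true

def QMinPSet (p : Finset α → Bool) (A B X : Finset α) : Prop :=
  QPSet p A B X ∧ ∀ Y, Y ⊂ X → ¬ QPSet p A B Y

theorem stmt5 (p : Finset α → Bool) (hp : Monop p)
    (A B A₁ A₂ X₁ X₂ : Finset α) (hdisj : Disjoint A B)
    (hun : A₁ ∪ A₂ = A) (hd12 : Disjoint A₁ A₂)
    (h2 : QMinPSet p A₂ (B ∪ A₁) X₂) (h1 : QMinPSet p A₁ (B ∪ X₂) X₁) :
    QMinPSet p A B (X₁ ∪ X₂) := by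
  obtain ⟨⟨hX2A, hpX2⟩, hmin2⟩ := h2
  obtain ⟨⟨hX1A, hpX1⟩, hmin1⟩ := h1
  have hsubA : X₁ ∪ X₂ ⊆ A := by
    rw [← hun]; exact Finset.union_subset_union hX1A hX2A
  have hdX : Disjoint X₁ X₂ := hd12.mono hX1A hX2A
  constructor
  · refine ⟨hsubA, ?_⟩
    have : X₁ ∪ X₂ ∪ B = X₁ ∪ (B ∪ X₂) := by
      ext x; simp; tauto
    rw [this]; exact hpX1
  · rintro Y hY ⟨hYA, hpY⟩
    set Y₁ := Y ∩ X₁ with hY1def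
    set Y₂ := Y ∩ X₂ with hY2def
    have hYsub : Y ⊆ X₁ ∪ X₂ := hY.subset
    have hYeq : Y = Y₁ ∪ Y₂ := by
      ext x; simp only [hY1def, hY2def, Finset.mem_union, Finset.mem_inter]
      constructor
      · intro hx; have := hYsub hx; simp at this; tauto
      · tauto
    have hY1 : Y₁ ⊆ X₁ := Finset.inter_subset_right
    have hY2 : Y₂ ⊆ X₂ := Finset.inter_subset_right
    by_cases hY2e : Y₂ = X₂
    · -- then Y₁ ⊂ X₁
      have hY1ne : Y₁ ≠ X₁ := by
        intro h
        apply hY.not_subset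
        rw [hYeq, h, hY2e]
      apply hmin1 Y₁ (Finset.ssubset_iff_subset_ne.2 ⟨hY1, hY1ne⟩)
      refine ⟨hY1.trans hX1A, ?_⟩
      have hsub : Y ∪ B ⊆ Y₁ ∪ (B ∪ X₂) := by
        rw [hYeq, hY2e]
        intro x hx; simp only [hY1def, Finset.mem_union, Finset.mem_inter] at hx ⊢; tauto
      have := hp.2 _ _ hsub
      rw [hpY] at this
      exact le_antisymm (Bool.le_true _) this
    · apply hmin2 Y₂ (Finset.ssubset_iff_subset_ne.2 ⟨hY2, hY2e⟩)
      refine ⟨hY2.trans hX2A, ?_⟩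
      have hsub : Y ∪ B ⊆ Y₂ ∪ (B ∪ A₁) := by
        rw [hYeq]
        intro x hx; simp only [hY1def, hY2def, Finset.mem_union, Finset.mem_inter] at hx ⊢
        rcases hx with (h | h) | h
        · right; right; exact hX1A h.2
        · left; exact h
        · right; left; exact h
      have := hp.2 _ _ hsub
      rw [hpY] at this
      exact le_antisymm (Bool.le_true _) this
end

section
/- Let p be a monotone property, A₁,A₂ a partition of A, X₂ a minimal p-set wrt ⟨A₂, B∪A₁⟩ and X₁ a minimal p-set wrt ⟨A₁, B∪X₂⟩. Then for every X ⊂ X₁∪X₂ with X∩X₁ ⊂ X₁, X is not a p-set wrt ⟨A,B⟩. -/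
variable {α : Type*} [DecidableEq α]

theorem stmt7 (p : Finset α → Bool) (hp : Monop p)
    (A B A₁ A₂ X₁ X₂ : Finset α) (hdisj : Disjoint A B)
    (hun : A₁ ∪ A₂ = A) (hd12 : Disjoint A₁ A₂)
    (h2 : QMinPSet p A₂ (B ∪ A₁) X₂) (h1 : QMinPSet p A₁ (B ∪ X₂) X₁) :
    ∀ X, X ⊂ X₁ ∪ X₂ → X ∩ X₁ ⊂ X₁ → ¬ QPSet p A B X := by
  rintro X hX hXX1 ⟨hXA, hpX⟩
  apply h1.2 (X ∩ X₁) hXX1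
  constructor
  · exact (Finset.inter_subset_right).trans h1.1.1
  · have hsub : X ∪ B ⊆ (X ∩ X₁) ∪ (B ∪ X₂) := by
      intro x hx
      simp only [Finset.mem_union, Finset.mem_inter] at *
      rcases hx with hx | hx
      · rcases Finset.mem_union.mp (hX.subset hx) with h | h
        · exact Or.inl ⟨hx, h⟩
        · exact Or.inr (Or.inr h)
      · exact Or.inr (Or.inl hx)
    have := hp.2 _ _ hsub
    rw [hpX] at this
    exact le_antisymm (Bool.le_true _) this
end

section
/- Let p be a monotone property, A₁,A₂ a partition of A, X₂ a minimal p-set wrt ⟨A₂, B∪A₁⟩ and X₁ a minimal p-set wrt ⟨A₁, B∪X₂⟩. Then for every X ⊂ X₁∪X₂ with X∩X₂ ⊂ X₂, X is not a p-set wrt ⟨A,B⟩. -/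
variable {α : Type*} [DecidableEq α]

theorem stmt8 (p : Finset α → Bool) (hp : Monop p)
    (A B A₁ A₂ X₁ X₂ : Finset α) (hdisj : Disjoint A B)
    (hun : A₁ ∪ A₂ = A) (hd12 : Disjoint A₁ A₂)
    (h2 : QMinPSet p A₂ (B ∪ A₁) X₂) (h1 : QMinPSet p A₁ (B ∪ X₂) X₁) :
    ∀ X, X ⊂ X₁ ∪ X₂ → X ∩ X₂ ⊂ X₂ → ¬ QPSet p A B X := by
  intro X hX hX2 hps
  have hX1A1 : X₁ ⊆ A₁ := h1.1.1
  have hsub : X ∪ B ⊆ (X ∩ X₂) ∪ (B ∪ A₁) := by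
    intro a ha
    simp only [Finset.mem_union, Finset.mem_inter] at *
    rcases ha with ha | ha
    · by_cases h : a ∈ X₂
      · exact Or.inl ⟨ha, h⟩
      · have : a ∈ X₁ ∪ X₂ := hX.1 ha
        simp only [Finset.mem_union] at this
        exact Or.inr (Or.inr (hX1A1 (this.resolve_right h)))
    · exact Or.inr (Or.inl ha)
  have hmono := hp.2 _ _ hsub
  rw [hps.2] at hmono
  have hp2 : p ((X ∩ X₂) ∪ (B ∪ A₁)) = true := by
    revert hmono; cases p ((X ∩ X₂) ∪ (B ∪ A₁)) <;> simp
  exact h2.2 (X ∩ X₂) hX2 ⟨Finset.inter_subset_right.trans h2.1.1, hp2⟩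
end
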